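/- Let a, b, c, d be real constants with a, b, c > 0 and b² - 4ac > 0, and let y : [0,∞) → ℝ be a nonnegative C² function satisfying a y'' + b y' + c y + d ≤ 0 on (0,∞). Set ν₁ := (b + √(b²-4ac))/(2a). If y(0) + d/c < 0 and y'(0) + ν₁ y(0) + 2d/(b - √(b²-4ac)) < 0, then y(t) < -d/c for all t ≥ 0. -/

import Mathlib

lemma exp_gronwall_neg (ν : ℝ) (f : ℝ → ℝ) (hf : Differentiable ℝ f)
    (h : ∀ t > (0:ℝ), deriv f t + ν * f t ≤ 0) (h0 : f 0 < 0) :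
    ∀ t ≥ (0:ℝ), f t < 0 := by
  intro t ht
  set F : ℝ → ℝ := fun t => Real.exp (ν * t) * f t with hF
  have hFd : ∀ x : ℝ, HasDerivAt F (Real.exp (ν * x) * ν * f x + Real.exp (ν * x) * deriv f x) x := by
    intro x
    have h' := (((hasDerivAt_id x).const_mul ν).exp).mul (hf x).hasDerivAt
    exact h'.congr_deriv (by simp)
  have hanti : AntitoneOn F (Set.Ici 0) := by
    apply antitoneOn_of_deriv_nonpos (convex_Ici 0)
    · exact fun x _ => ((hFd x).continuousAt).continuousWithinAt
    · exact fun x _ => ((hFd x).differentiableAt).differentiableWithinAt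
    · intro x hx
      rw [(hFd x).deriv]
      have hx0 : 0 < x := by simpa [interior_Ici] using hx
      have := h x hx0
      nlinarith [Real.exp_pos (ν * x), mul_nonneg (Real.exp_pos (ν * x)).le (neg_nonneg.mpr this)]
  have hle : F t ≤ F 0 := hanti (Set.mem_Ici.mpr le_rfl) ht ht
  have : F 0 < 0 := by simp [hF, h0]
  have hFt : F t < 0 := lt_of_le_of_lt hle this
  have hept := Real.exp_pos (ν * t)
  by_contra hcon
  push_neg at hcon
  have : 0 ≤ F t := mul_nonneg hept.le hcon
  linarith

theorem second_order_gronwall_overdamped (a b c d : ℝ)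
    (ha : 0 < a) (hb : 0 < b) (hc : 0 < c) (hdisc : 0 < b^2 - 4*a*c)
    (y : ℝ → ℝ) (hy : ContDiff ℝ 2 y) (hynn : ∀ t ≥ (0:ℝ), 0 ≤ y t)
    (hineq : ∀ t > (0:ℝ), a * deriv (deriv y) t + b * deriv y t + c * y t + d ≤ 0)
    (ν₁ : ℝ) (hν₁ : ν₁ = (b + Real.sqrt (b^2 - 4*a*c))/(2*a))
    (h1 : y 0 + d/c < 0)
    (h2 : deriv y 0 + ν₁ * y 0 + 2*d/(b - Real.sqrt (b^2 - 4*a*c)) < 0) :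
    ∀ t ≥ (0:ℝ), y t < -d/c := by
  obtain ⟨s, hs⟩ : ∃ x : ℝ, x = Real.sqrt (b^2 - 4*a*c) := ⟨_, rfl⟩
  rw [← hs] at hν₁ h2
  have hs2 : s^2 = b^2 - 4*a*c := by rw [hs]; exact Real.sq_sqrt hdisc.le
  have hsnn : 0 ≤ s := hs ▸ Real.sqrt_nonneg _
  have hsb : s < b := by nlinarith
  obtain ⟨ν₂, hν₂⟩ : ∃ x : ℝ, x = (b - s)/(2*a) := ⟨_, rfl⟩
  have ha2 : (2*a : ℝ) ≠ 0 := by positivity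
  have hν₁' : ν₁ * (2*a) = b + s := by rw [hν₁]; field_simp
  have hν₂' : ν₂ * (2*a) = b - s := by rw [hν₂]; field_simp
  have hsuma : a * (ν₁ + ν₂) = b := by
    have h5 : a * (ν₁ + ν₂) * 2 = b * 2 := by linear_combination hν₁' + hν₂'
    exact mul_right_cancel₀ two_ne_zero h5
  have hproda : a * (ν₂ * ν₁) = c := by
    have h4 : (ν₂*(2*a)) * (ν₁*(2*a)) = 4*a*c := by
      rw [hν₁', hν₂']; linear_combination -hs2
    have h4' : a * (ν₂ * ν₁) * (4*a) = c * (4*a) := by linear_combination h4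
    exact mul_right_cancel₀ (by positivity) h4'
  -- differentiability facts
  have hy1 : Differentiable ℝ y := hy.differentiable (by norm_num)
  have hy2 : Differentiable ℝ (deriv y) := by
    have h21 : ContDiff ℝ ((1:WithTop ℕ∞) + 1) y := by
      have h12 : ((1:WithTop ℕ∞) + 1) = 2 := by norm_num
      rw [h12]; exact hy
    exact ((contDiff_succ_iff_deriv.mp h21).2.2).differentiable (by norm_num)
  -- first Gronwall step
  obtain ⟨u, hu⟩ : ∃ u : ℝ → ℝ, u = fun t => deriv y t + ν₁ * y t + d * ν₁ / c := ⟨_, rfl⟩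
  have hud : ∀ x : ℝ, HasDerivAt u (deriv (deriv y) x + ν₁ * deriv y x) x := by
    intro x
    rw [hu]
    simpa using ((hy2 x).hasDerivAt.add (((hy1 x).hasDerivAt).const_mul ν₁)).add_const (d * ν₁ / c)
  have hudiff : Differentiable ℝ u := fun x => ((hud x).differentiableAt)
  have huineq : ∀ t > (0:ℝ), deriv u t + ν₂ * u t ≤ 0 := by
    intro t ht
    rw [(hud t).deriv]
    have h0 := hineq t ht
    have e1 : c * (d * ν₁ / c) = d * ν₁ := by field_simp
    have key0 : c * (a * (deriv (deriv y) t + ν₁ * deriv y t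
          + ν₂ * (deriv y t + ν₁ * y t + d * ν₁ / c)))
        = c * (a * deriv (deriv y) t + b * deriv y t + c * y t + d) := by
      linear_combination (c * deriv y t) * hsuma + (c * y t) * hproda
        + (a * ν₂) * e1 + d * hproda
    have key : a * (deriv (deriv y) t + ν₁ * deriv y t + ν₂ * u t)
        = a * deriv (deriv y) t + b * deriv y t + c * y t + d := by
      rw [hu]
      exact mul_left_cancel₀ hc.ne' key0
    have hA : a * (deriv (deriv y) t + ν₁ * deriv y t + ν₂ * u t) ≤ a * 0 := by
      rw [key]; simpa using h0
    exact le_of_mul_le_mul_left hA ha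
  have hu0 : u 0 < 0 := by
    have heq : d * ν₁ / c = 2*d/(b - s) := by
      rw [div_eq_div_iff hc.ne' (by linarith : b - s ≠ 0)]
      have heq' : d * ν₁ * (b - s) * (2*a) = 2*d*c * (2*a) := by
        linear_combination (d*(b-s)) * hν₁' + (-d) * hs2
      exact mul_right_cancel₀ ha2 heq'
    rw [hu]
    simp only []
    rw [heq]
    linarith
  have huneg : ∀ t ≥ (0:ℝ), u t < 0 := exp_gronwall_neg ν₂ u hudiff huineq hu0
  -- second Gronwall step
  obtain ⟨w, hw⟩ : ∃ w : ℝ → ℝ, w = fun t => y t + d/c := ⟨_, rfl⟩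
  have hwd : ∀ x : ℝ, HasDerivAt w (deriv y x) x := by
    intro x
    rw [hw]
    simpa using (hy1 x).hasDerivAt.add_const (d/c)
  have hwdiff : Differentiable ℝ w := fun x => (hwd x).differentiableAt
  have hwineq : ∀ t > (0:ℝ), deriv w t + ν₁ * w t ≤ 0 := by
    intro t ht
    rw [(hwd t).deriv]
    have hut := huneg t ht.le
    have heq : deriv y t + ν₁ * w t = u t := by
      rw [hw, hu]
      simp only []
      field_simp
      ring
    linarith [heq ▸ hut]
  have hw0 : w 0 < 0 := by rw [hw]; simpa using h1
  intro t ht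
  have hwt := exp_gronwall_neg ν₁ w hwdiff hwineq hw0 t ht
  rw [hw] at hwt
  simp only [] at hwt
  rw [neg_div]
  linarith
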